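/- Let α be a real number and let n, i be nonnegative integers with i ≤ n. Then s(n,i,α) = Σ_{k=0}^{n-i} C(n,k)·(-α)_k·s(n-k,i), where C(n,k) is the binomial coefficient. -/
import Mathlib


/-- Non-central Stirling numbers of the first kind `s(n, k, α)`. -/
noncomputable def ncStirling : ℕ → ℕ → ℝ → ℝ
  | 0, 0, _ => 1
  | 0, _ + 1, _ => 0
  | n + 1, 0, α => (-α - n) * ncStirling n 0 α
  | n + 1, k + 1, α => ncStirling n k α + (-α - n) * ncStirling n (k + 1) α

/-- Signed Stirling numbers of the first kind `s(n, k)`. -/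
def stirling1 : ℕ → ℕ → ℤ
  | 0, 0 => 1
  | 0, _ + 1 => 0
  | n + 1, 0 => -(n : ℤ) * stirling1 n 0
  | n + 1, k + 1 => stirling1 n k - (n : ℤ) * stirling1 n (k + 1)

/-- Falling factorial `(β)_i = β (β-1) ⋯ (β-i+1)`, with `(β)_0 = 1`. -/
noncomputable def fall (β : ℝ) (i : ℕ) : ℝ := ∏ j ∈ Finset.range i, (β - j)

lemma fall_succ (β : ℝ) (k : ℕ) : fall β (k + 1) = fall β k * (β - k) :=
  Finset.prod_range_succ _ _

lemma stirling1_eq_zero : ∀ n k : ℕ, n < k → stirling1 n k = 0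
  | 0, 0, h => absurd h (lt_irrefl 0)
  | 0, _ + 1, _ => rfl
  | n + 1, 0, h => absurd h (Nat.not_lt_zero _)
  | n + 1, k + 1, h => by
      rw [stirling1, stirling1_eq_zero n k (by omega), stirling1_eq_zero n (k + 1) (by omega)]
      ring

lemma key (α : ℝ) : ∀ n i : ℕ, ncStirling n i α =
    ∑ k ∈ Finset.range (n + 1), (n.choose k : ℝ) * fall (-α) k * (stirling1 (n - k) i : ℝ) := by
  intro n
  induction n with
  | zero =>
    intro i
    cases i <;> simp [ncStirling, stirling1, fall]
  | succ n ih =>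
    intro i
    have hstep : ∑ k ∈ Finset.range (n + 1 + 1),
        ((n + 1).choose k : ℝ) * fall (-α) k * (stirling1 (n + 1 - k) i : ℝ) =
        ∑ k ∈ Finset.range (n + 1), (n.choose k : ℝ) * fall (-α) k *
          ((stirling1 (n - k + 1) i : ℝ) + (-α - k) * (stirling1 (n - k) i : ℝ)) := by
      rw [Finset.sum_range_succ']
      have h1 : ∀ k ∈ Finset.range (n + 1),
          ((n + 1).choose (k + 1) : ℝ) * fall (-α) (k + 1) * (stirling1 (n + 1 - (k + 1)) i : ℝ)
          = (n.choose k : ℝ) * fall (-α) k * ((-α - k) * (stirling1 (n - k) i : ℝ))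
            + (n.choose (k + 1) : ℝ) * fall (-α) (k + 1) * (stirling1 (n - k) i : ℝ) := by
        intro k hk
        rw [Nat.choose_succ_succ, Nat.succ_sub_succ, fall_succ]
        push_cast
        ring
      rw [Finset.sum_congr rfl h1, Finset.sum_add_distrib]
      have h2 : ∑ k ∈ Finset.range (n + 1), (n.choose k : ℝ) * fall (-α) k *
          ((stirling1 (n - k + 1) i : ℝ) + (-α - k) * (stirling1 (n - k) i : ℝ))
          = ∑ k ∈ Finset.range (n + 1), (n.choose k : ℝ) * fall (-α) k * (stirling1 (n - k + 1) i : ℝ)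
            + ∑ k ∈ Finset.range (n + 1), (n.choose k : ℝ) * fall (-α) k * ((-α - k) * (stirling1 (n - k) i : ℝ)) := by
        rw [← Finset.sum_add_distrib]
        exact Finset.sum_congr rfl fun k _ => by ring
      rw [h2]
      have h3 : ∑ k ∈ Finset.range (n + 1), (n.choose k : ℝ) * fall (-α) k * (stirling1 (n - k + 1) i : ℝ)
          = ∑ k ∈ Finset.range n, (n.choose (k + 1) : ℝ) * fall (-α) (k + 1) * (stirling1 (n - (k + 1) + 1) i : ℝ)
            + (n.choose 0 : ℝ) * fall (-α) 0 * (stirling1 (n - 0 + 1) i : ℝ) :=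
        Finset.sum_range_succ' _ _
      have h4 : ∑ k ∈ Finset.range (n + 1), (n.choose (k + 1) : ℝ) * fall (-α) (k + 1) * (stirling1 (n - k) i : ℝ)
          = ∑ k ∈ Finset.range n, (n.choose (k + 1) : ℝ) * fall (-α) (k + 1) * (stirling1 (n - k) i : ℝ) := by
        rw [Finset.sum_range_succ, Nat.choose_succ_self]
        simp
      have h5 : ∀ k ∈ Finset.range n, (n.choose (k + 1) : ℝ) * fall (-α) (k + 1) * (stirling1 (n - (k + 1) + 1) i : ℝ)
          = (n.choose (k + 1) : ℝ) * fall (-α) (k + 1) * (stirling1 (n - k) i : ℝ) := by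
        intro k hk
        simp only [Finset.mem_range] at hk
        have h6 : n - (k + 1) + 1 = n - k := by omega
        rw [h6]
      rw [h3, Finset.sum_congr rfl h5, h4]
      simp [fall, stirling1]
      ring
    rw [hstep]
    cases i with
    | zero =>
      rw [show ncStirling (n + 1) 0 α = (-α - n) * ncStirling n 0 α from rfl, ih 0,
        Finset.mul_sum]
      refine Finset.sum_congr rfl fun k hk => ?_
      simp only [Finset.mem_range] at hk
      have hk' : k ≤ n := by omega
      rw [show stirling1 (n - k + 1) 0 = -((n - k : ℕ) : ℤ) * stirling1 (n - k) 0 from rfl]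
      have : ((n - k : ℕ) : ℝ) = (n : ℝ) - k := by
        push_cast [Nat.cast_sub hk']; ring
      push_cast
      rw [this]
      ring
    | succ j =>
      rw [show ncStirling (n + 1) (j + 1) α = ncStirling n j α + (-α - n) * ncStirling n (j + 1) α from rfl,
        ih j, ih (j + 1), Finset.mul_sum, ← Finset.sum_add_distrib]
      refine Finset.sum_congr rfl fun k hk => ?_
      simp only [Finset.mem_range] at hk
      have hk' : k ≤ n := by omega
      rw [show stirling1 (n - k + 1) (j + 1) = stirling1 (n - k) j - ((n - k : ℕ) : ℤ) * stirling1 (n - k) (j + 1) from rfl]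
      have : ((n - k : ℕ) : ℝ) = (n : ℝ) - k := by
        push_cast [Nat.cast_sub hk']; ring
      push_cast
      rw [this]
      ring


theorem ncStirling_eq_sum (α : ℝ) (n i : ℕ) (h : i ≤ n) :
    ncStirling n i α = ∑ k ∈ Finset.range (n - i + 1),
      (n.choose k : ℝ) * fall (-α) k * (stirling1 (n - k) i : ℝ) := by
  rw [key α n i]
  symm
  apply Finset.sum_subset
  · intro k hk
    simp only [Finset.mem_range] at *
    omega
  · intro k hk hk'
    simp only [Finset.mem_range] at *
    rw [stirling1_eq_zero (n - k) i (by omega)]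
    simp
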